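/- arXiv:0803.4386 — 2 statements merged into one kernel-verified Lean document; each statement's English description precedes it below -/
import Mathlib

section
/- A connected graph G on vertex set {1,...,n} has no G-active edge (with respect to the lexicographic edge order) if and only if G is an increasing tree, i.e., a tree in which vertex labels strictly increase along every simple path starting at vertex 1. -/
open scoped Classical

noncomputable section

/-- The lexicographic key of the edge `{a, b}` of the complete graph on `Fin n`:
the pair `(min a b, max a b)` with the lexicographic order. -/
def edgeKey {n : ℕ} (a b : Fin n) : Fin n ×ₗ Fin n := toLex (min a b, max a b)

/-- The spanning subgraph `G^{>e}` of `G` consisting of the edges strictly greater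
than `e` in the lexicographic order. -/
def aboveEdge {n : ℕ} (G : SimpleGraph (Fin n)) (e : Fin n ×ₗ Fin n) :
    SimpleGraph (Fin n) where
  Adj a b := G.Adj a b ∧ e < edgeKey a b
  symm := ⟨by
    intro a b hab
    refine ⟨hab.1.symm, ?_⟩
    have : edgeKey a b = edgeKey b a := by
      unfold edgeKey; rw [min_comm a b, max_comm a b]
    rw [← this]; exact hab.2⟩
  loopless := ⟨fun a ha => G.loopless.irrefl a ha.1⟩

/-- An edge `e = (i, j)` of `K_n` (with `i < j`) is `G`-active if `i` and `j` are joined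
by a path in `G^{>e}`. -/
def IsActive {n : ℕ} (G : SimpleGraph (Fin n)) (e : Fin n ×ₗ Fin n) : Prop :=
  (ofLex e).1 < (ofLex e).2 ∧ (aboveEdge G e).Reachable (ofLex e).1 (ofLex e).2

instance {n : ℕ} : Fintype (Fin n ×ₗ Fin n) := Fintype.ofEquiv (Fin n × Fin n) toLex

/-- The finset of `G`-active edges. -/
def activeEdges {n : ℕ} (G : SimpleGraph (Fin n)) : Finset (Fin n ×ₗ Fin n) :=
  Finset.univ.filter (IsActive G)

/-- `G ⊕ e`: toggle the edge `e` (delete it if present, add it otherwise). -/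
def toggleEdge {n : ℕ} (G : SimpleGraph (Fin n)) (e : Fin n ×ₗ Fin n) :
    SimpleGraph (Fin n) :=
  if G.Adj (ofLex e).1 (ofLex e).2 then G.deleteEdges {s((ofLex e).1, (ofLex e).2)}
  else G ⊔ SimpleGraph.fromEdgeSet {s((ofLex e).1, (ofLex e).2)}

/-- The map `Ψ`: toggle the least `G`-active edge, if any. -/
def Psi {n : ℕ} (G : SimpleGraph (Fin n)) : SimpleGraph (Fin n) :=
  if h : (activeEdges G).Nonempty then toggleEdge G ((activeEdges G).min' h) else G

end

section aux

open SimpleGraph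

variable {n : ℕ} {G : SimpleGraph (Fin n)}

private lemma edgeKey_comm (a b : Fin n) : edgeKey a b = edgeKey b a := by
  unfold edgeKey; rw [min_comm, max_comm]

private lemma edgeKey_congr {x y u v : Fin n} (h : s(x, y) = s(u, v)) :
    edgeKey x y = edgeKey u v := by
  rcases Sym2.eq_iff.mp h with ⟨rfl, rfl⟩ | ⟨rfl, rfl⟩
  · rfl
  · exact edgeKey_comm _ _

private lemma key_lt_of_lt_min {i j x y : Fin n} (hx : i < x) (hy : i < y) :
    toLex (i, j) < edgeKey x y :=
  Prod.Lex.lt_iff.mpr (Or.inl (lt_min hx hy))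

private lemma key_lt_of_snd_lt {i j y : Fin n} (hiy : i < y) (hjy : j < y) :
    toLex (i, j) < edgeKey i y := by
  unfold edgeKey
  rw [min_eq_left hiy.le, max_eq_right hiy.le]
  exact Prod.Lex.lt_iff.mpr (Or.inr ⟨rfl, hjy⟩)

private lemma snd_lt_of_lt_key {e : Fin n ×ₗ Fin n} {z : Fin n} (hne : z ≠ (ofLex e).1)
    (h : e < edgeKey (ofLex e).1 z) : (ofLex e).2 < z := by
  set i := (ofLex e).1 with hi
  set j := (ofLex e).2 with hj
  have he : e = toLex (i, j) := rfl
  rw [he] at h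
  rcases hne.lt_or_gt with hzi | hiz
  · exfalso
    unfold edgeKey at h
    rw [min_eq_right hzi.le, max_eq_left hzi.le] at h
    rcases Prod.Lex.lt_iff.mp h with h' | h'
    · exact absurd (h'.trans hzi) (lt_irrefl i)
    · exact absurd h'.1 hzi.ne'
  · unfold edgeKey at h
    rw [min_eq_left hiz.le, max_eq_right hiz.le] at h
    rcases Prod.Lex.lt_iff.mp h with h' | h'
    · exact absurd h' (lt_irrefl i)
    · exact h'.2

private lemma chain'_lt_head_le {α : Type*} [LinearOrder α] {a : α} {l : List α}
    (h : (a :: l).Chain' (· < ·)) {x : α} (hx : x ∈ a :: l) : a ≤ x := by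
  have hp := List.isChain_iff_pairwise.mp h
  rcases List.mem_cons.mp hx with rfl | hx'
  · rfl
  · exact (List.rel_of_pairwise_cons hp hx').le

private lemma chain'_lt_le_getLast {α : Type*} [LinearOrder α] {l : List α}
    (h : l.Chain' (· < ·)) {x : α} (hx : x ∈ l) (hl : l ≠ []) : x ≤ l.getLast hl := by
  have hp := List.isChain_iff_pairwise.mp h
  have hd : l.dropLast ++ [l.getLast hl] = l := List.dropLast_append_getLast hl
  rw [← hd] at hp hx
  rcases List.mem_append.mp hx with h1 | h1
  · exact ((List.pairwise_append.mp hp).2.2 x h1 _ (List.mem_singleton_self _)).le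
  · rw [List.mem_singleton.mp h1]

private lemma reachable_above {e : Fin n ×ₗ Fin n} {a b : Fin n} (q : G.Walk a b)
    (hq : ∀ x y, s(x, y) ∈ q.edges → e < edgeKey x y) :
    (aboveEdge G e).Reachable a b := by
  refine ⟨q.transfer (aboveEdge G e) ?_⟩
  intro f hf
  induction f using Sym2.ind with
  | _ x y => exact (SimpleGraph.mem_edgeSet _).mpr ⟨q.adj_of_mem_edges hf, hq x y hf⟩

private lemma exists_path_above {e : Fin n ×ₗ Fin n} {a b : Fin n}
    (h : (aboveEdge G e).Reachable a b) :
    ∃ p : G.Walk a b, p.IsPath ∧ ∀ x y, s(x, y) ∈ p.edges → e < edgeKey x y := by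
  obtain ⟨w⟩ := h
  have hle : aboveEdge G e ≤ G := fun a b hab => hab.1
  have hsub : ∀ f ∈ w.bypass.edges, f ∈ G.edgeSet := fun f hf =>
    SimpleGraph.edgeSet_mono hle (w.bypass.edges_subset_edgeSet hf)
  refine ⟨w.bypass.transfer G hsub, (w.bypass_isPath).transfer hsub, ?_⟩
  intro x y hxy
  rw [SimpleGraph.Walk.edges_transfer] at hxy
  exact ((SimpleGraph.mem_edgeSet _).mp (w.bypass.edges_subset_edgeSet hxy)).2

end aux

section aux2

open SimpleGraph

variable {n : ℕ} {G : SimpleGraph (Fin n)}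

private lemma unique_small_nbr (hn : 1 ≤ n) (hT : G.IsTree)
    (hInc : ∀ (v : Fin n) (p : G.Walk ⟨0, hn⟩ v), p.IsPath → List.Chain' (· < ·) p.support)
    {v a b : Fin n} (ha : G.Adj a v) (hb : G.Adj b v) (hav : a < v) (hbv : b < v) :
    a = b := by
  have build : ∀ {c : Fin n}, G.Adj c v → c < v →
      ∃ p : G.Walk ⟨0, hn⟩ v, p.IsPath ∧ ∃ q : G.Walk ⟨0, hn⟩ c,
        q.IsPath ∧ p.support = q.support ++ [v] := by
    intro c hc hcv
    obtain ⟨w⟩ := hT.isConnected.preconnected ⟨0, hn⟩ c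
    have hqp : (w.toPath : G.Walk ⟨0, hn⟩ c).IsPath := w.toPath.2
    set q : G.Walk ⟨0, hn⟩ c := (w.toPath : G.Walk ⟨0, hn⟩ c) with hqdef
    have hvn : v ∉ q.support := by
      intro hv
      have hchain := hInc c q hqp
      have hle := chain'_lt_le_getLast hchain hv (by simp)
      rw [SimpleGraph.Walk.getLast_support] at hle
      exact absurd hle (not_le.mpr hcv)
    have hcons : (SimpleGraph.Walk.cons hc.symm q.reverse).IsPath := by
      rw [SimpleGraph.Walk.cons_isPath_iff]
      exact ⟨hqp.reverse, by simpa using hvn⟩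
    refine ⟨(SimpleGraph.Walk.cons hc.symm q.reverse).reverse, hcons.reverse, q, hqp, ?_⟩
    simp [SimpleGraph.Walk.support_append]
  obtain ⟨p1, hp1, q1, hq1, hs1⟩ := build ha hav
  obtain ⟨p2, hp2, q2, hq2, hs2⟩ := build hb hbv
  have hpe : p1 = p2 := by
    obtain ⟨p0, -, hup⟩ := hT.existsUnique_path ⟨0, hn⟩ v
    rw [hup p1 hp1, hup p2 hp2]
  have happ : q1.support ++ [v] = q2.support ++ [v] := by rw [← hs1, ← hs2, hpe]
  have hqq : q1.support = q2.support := by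
    have := congrArg List.dropLast happ
    simpa [List.dropLast_concat] using this
  have h1 : q1.support.getLast (by simp) = a := SimpleGraph.Walk.getLast_support q1
  have h2 : q2.support.getLast (by simp) = b := SimpleGraph.Walk.getLast_support q2
  rw [← h1, ← h2]
  congr 1

private lemma mem_support_le_max
    (H1 : ∀ {v a b : Fin n}, G.Adj a v → G.Adj b v → a < v → b < v → a = b) :
    ∀ {a b : Fin n} (p : G.Walk a b), p.IsPath → ∀ x ∈ p.support, x ≤ max a b := by
  intro a b p
  induction p with
  | nil =>
    intro _ x hx
    rw [SimpleGraph.Walk.support_nil, List.mem_singleton] at hx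
    simp [hx]
  | @cons a c b h q ih =>
    intro hp x hx
    rw [SimpleGraph.Walk.support_cons] at hx
    rcases List.mem_cons.mp hx with rfl | hx'
    · exact le_max_left _ _
    · have hq : q.IsPath := hp.of_cons
      have hxq := ih hq x hx'
      by_cases hc : c ≤ max a b
      · exact hxq.trans (max_le hc (le_max_right a b))
      · exfalso
        push_neg at hc
        have hca : a < c := (le_max_left a b).trans_lt hc
        have hcb : b < c := (le_max_right a b).trans_lt hc
        cases q with
        | nil => exact absurd rfl hcb.ne'
        | @cons c d b h' q' =>
          have hdm : d ∈ (SimpleGraph.Walk.cons h' q').support := by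
            rw [SimpleGraph.Walk.support_cons]
            exact List.mem_cons_of_mem _ q'.start_mem_support
          have hd : d ≤ max c b := ih hq d hdm
          have hdc : d < c := lt_of_le_of_ne (by rwa [max_eq_left hcb.le] at hd) h'.ne'
          have had : a ≠ d := by
            intro h''
            have hna := (SimpleGraph.Walk.cons_isPath_iff _ _).mp hp |>.2
            exact hna (h'' ▸ hdm)
          exact had (H1 h h'.symm hca hdc)

private lemma lemK (hA : ∀ e : Fin n ×ₗ Fin n, ¬ IsActive G e) {w : Fin n} :
    ∀ {a b : Fin n} (q : G.Walk a b), G.Adj b w →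
      q.support.Chain' (· < ·) → a < w → w ∉ q.support → w < b → False := by
  intro a b q
  induction q with
  | nil => intro _ _ haw _ hwb; exact lt_asymm haw hwb
  | @cons u c b h' q' ih =>
    intro h hc haw hns hwb
    rw [SimpleGraph.Walk.support_cons] at hc hns
    have hcs : c ∈ q'.support := q'.start_mem_support
    have hct : List.Chain' (· < ·) q'.support := hc.tail
    have huc : u < c := by
      have hp := List.isChain_iff_pairwise.mp hc
      exact List.rel_of_pairwise_cons hp hcs
    have hwc : c ≠ w := fun hcw => hns (List.mem_cons_of_mem _ (hcw ▸ hcs))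
    rcases hwc.lt_or_gt with hcw | hwc'
    · exact ih h hct hcw (fun hx => hns (List.mem_cons_of_mem _ hx)) hwb
    · -- active edge (u, w)
      have hsup : ∀ x ∈ (q'.concat h).support, u < x := by
        intro x hx
        rw [SimpleGraph.Walk.support_concat] at hx
        rcases List.mem_append.mp hx with hx1 | hx1
        · have hct' : List.Chain' (· < ·) (c :: q'.support.tail) := by
            rwa [SimpleGraph.Walk.support_eq_cons q'] at hct
          have hx1' : x ∈ c :: q'.support.tail := by
            rwa [← SimpleGraph.Walk.support_eq_cons q']
          exact huc.trans_le (chain'_lt_head_le hct' hx1')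
        · rw [List.mem_singleton.mp hx1]; exact haw
      refine hA (toLex (u, w)) ⟨haw, reachable_above
        (SimpleGraph.Walk.cons h' (q'.concat h)) ?_⟩
      intro x y hxy
      change s(x, y) ∈ (SimpleGraph.Walk.cons h' (q'.concat h)).edges at hxy
      rw [SimpleGraph.Walk.edges_cons] at hxy
      rcases List.mem_cons.mp hxy with he | he
      · rw [edgeKey_congr he]
        exact key_lt_of_snd_lt huc hwc'
      · exact key_lt_of_lt_min
          (hsup x (SimpleGraph.Walk.fst_mem_support_of_mem_edges _ he))
          (hsup y (SimpleGraph.Walk.snd_mem_support_of_mem_edges _ he))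

end aux2

section aux3

open SimpleGraph

variable {n : ℕ} {G : SimpleGraph (Fin n)}

private lemma acyclic_of_no_active (hA : ∀ e : Fin n ×ₗ Fin n, ¬ IsActive G e) :
    G.IsAcyclic := by
  classical
  rw [SimpleGraph.isAcyclic_iff_forall_edge_isBridge]
  by_contra hcon
  push_neg at hcon
  obtain ⟨f, hf, hnb⟩ := hcon
  set S := Finset.univ.filter (fun e : Fin n ×ₗ Fin n =>
    (ofLex e).1 < (ofLex e).2 ∧ G.Adj (ofLex e).1 (ofLex e).2 ∧
      ¬ G.IsBridge s((ofLex e).1, (ofLex e).2)) with hS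
  have hSne : S.Nonempty := by
    revert hf hnb
    induction f using Sym2.ind with
    | _ x y =>
      intro hf hnb
      have hadj : G.Adj x y := (SimpleGraph.mem_edgeSet _).mp hf
      rcases hadj.ne.lt_or_gt with hxy | hyx
      · exact ⟨toLex (x, y), by
          simp only [hS, Finset.mem_filter, Finset.mem_univ, true_and]
          exact ⟨hxy, hadj, hnb⟩⟩
      · refine ⟨toLex (y, x), by
          simp only [hS, Finset.mem_filter, Finset.mem_univ, true_and]
          refine ⟨hyx, hadj.symm, ?_⟩
          rw [Sym2.eq_swap]
          exact hnb⟩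
  set m := S.min' hSne with hm
  have hmS : m ∈ S := S.min'_mem hSne
  have hmS2 := Finset.mem_filter.mp hmS
  obtain ⟨-, hij, hadjm, hnbm⟩ := hmS2
  set i := (ofLex m).1 with hi
  set j := (ofLex m).2 with hj
  have hreach : (G \ SimpleGraph.fromEdgeSet {s(i, j)}).Reachable i j := by
    by_contra hre
    exact hnbm ((SimpleGraph.isBridge_iff).mpr hre)
  obtain ⟨w0, hw0⟩ := (SimpleGraph.reachable_delete_edges_iff_exists_walk).mp hreach
  set p : G.Walk i j := (w0.toPath : G.Walk i j) with hp
  have hpp : p.IsPath := w0.toPath.2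
  have hpnot : s(i, j) ∉ p.edges := fun hmem => hw0 (SimpleGraph.Walk.edges_toPath_subset w0 hmem)
  have hcyc : (SimpleGraph.Walk.cons hadjm.symm p).IsCycle := by
    rw [SimpleGraph.Walk.cons_isCycle_iff]
    refine ⟨hpp, ?_⟩
    rw [Sym2.eq_swap]
    exact hpnot
  have hkeys : ∀ x y, s(x, y) ∈ p.edges → m < edgeKey x y := by
    intro x y hxy
    have hadjxy : G.Adj x y := SimpleGraph.Walk.adj_of_mem_edges _ hxy
    have hcyc2 : ∃ (u : Fin n) (c : G.Walk u u), c.IsCycle ∧ s(x, y) ∈ c.edges :=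
      ⟨j, _, hcyc, by rw [SimpleGraph.Walk.edges_cons]; exact List.mem_cons_of_mem _ hxy⟩
    have hnbxy := (SimpleGraph.adj_and_reachable_delete_edges_iff_exists_cycle).mpr hcyc2
    have hmle : ∀ x' y' : Fin n, x' < y' → G.Adj x' y' →
        ¬ G.IsBridge s(x', y') → m ≤ toLex (x', y') := by
      intro x' y' h1 h2 h3
      refine S.min'_le _ ?_
      simp only [hS, Finset.mem_filter, Finset.mem_univ, true_and]
      exact ⟨h1, h2, h3⟩
    rcases hadjxy.ne.lt_or_gt with hxy' | hyx'
    · have hle : m ≤ toLex (x, y) :=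
        hmle x y hxy' hadjxy (fun hb => (SimpleGraph.isBridge_iff).mp hb hnbxy.2)
      have hne : m ≠ toLex (x, y) := by
        intro hmeq
        apply hpnot
        have hseq : s(i, j) = s(x, y) := by rw [hi, hj, hmeq]; rfl
        rw [hseq]
        exact hxy
      have hkey : edgeKey x y = toLex (x, y) := by
        unfold edgeKey; rw [min_eq_left hxy'.le, max_eq_right hxy'.le]
      rw [hkey]
      exact lt_of_le_of_ne hle hne
    · have hreach' : (G \ SimpleGraph.fromEdgeSet {s(y, x)}).Reachable y x := by
        rw [Sym2.eq_swap]
        exact hnbxy.2.symm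
      have hle : m ≤ toLex (y, x) :=
        hmle y x hyx' hadjxy.symm (fun hb => (SimpleGraph.isBridge_iff).mp hb hreach')
      have hne : m ≠ toLex (y, x) := by
        intro hmeq
        apply hpnot
        have hseq : s(i, j) = s(y, x) := by rw [hi, hj, hmeq]; rfl
        rw [hseq, Sym2.eq_swap]
        exact hxy
      have hkey : edgeKey x y = toLex (y, x) := by
        unfold edgeKey; rw [min_eq_right hyx'.le, max_eq_left hyx'.le]
      rw [hkey]
      exact lt_of_le_of_ne hle hne
  exact hA m ⟨hij, reachable_above p hkeys⟩

private lemma incr_of_no_active (hn : 1 ≤ n)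
    (hA : ∀ e : Fin n ×ₗ Fin n, ¬ IsActive G e) :
    ∀ (v : Fin n) (p : G.Walk ⟨0, hn⟩ v), p.IsPath → List.Chain' (· < ·) p.support := by
  have key : ∀ (u v : Fin n) (p : G.Walk u v), u = ⟨0, hn⟩ → p.IsPath →
      List.Chain' (· < ·) p.support := by
    intro u v p
    induction p using SimpleGraph.Walk.concatRec with
    | Hnil => intro _ _; exact List.isChain_singleton _
    | @Hconcat u b v q h ihq =>
      intro hu hp
      have h2 := hp.reverse
      rw [SimpleGraph.Walk.reverse_concat, SimpleGraph.Walk.cons_isPath_iff] at h2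
      have hqp : q.IsPath := by simpa using h2.1.reverse
      have hv : v ∉ q.support := by simpa using h2.2
      have hch := ihq hu hqp
      rw [SimpleGraph.Walk.support_concat]
      refine List.isChain_append.mpr ⟨hch, List.isChain_singleton _, ?_⟩
      intro x hx y hy
      have hyv : v = y := by simpa using hy
      have hxb : b = x := by
        rw [List.getLast?_eq_getLast (l := q.support) (by simp), Option.mem_some_iff,
          SimpleGraph.Walk.getLast_support] at hx
        exact hx
      subst hyv
      subst hxb
      by_contra hbv
      have hne : v ≠ b := fun hvb => hv (hvb ▸ q.end_mem_support)
      have hwb : v < b := lt_of_le_of_ne (not_lt.mp hbv) hne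
      have h0v : u < v := by
        subst hu
        have hne0 : v ≠ ⟨0, hn⟩ := fun hv0 => hv (hv0 ▸ q.start_mem_support)
        refine lt_of_le_of_ne ?_ (Ne.symm hne0)
        exact Fin.mk_le_of_le_val (Nat.zero_le _)
      exact (lemK hA q h hch h0v hv hwb).elim
  intro v p hp
  exact key _ v p rfl hp

end aux3

/-- A connected graph `G` on `{1, …, n}` (here `Fin n`, with vertex `0` playing the role of
the label `1`) has no `G`-active edge iff it is an increasing tree, i.e. a tree in which the
vertex labels strictly increase along every simple path starting at the first vertex. -/
theorem no_active_iff_increasing_tree {n : ℕ} (hn : 1 ≤ n) (G : SimpleGraph (Fin n))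
    (hG : G.Connected) :
    (∀ e : Fin n ×ₗ Fin n, ¬ IsActive G e) ↔
      (G.IsTree ∧ ∀ (v : Fin n) (p : G.Walk ⟨0, hn⟩ v), p.IsPath →
        List.Chain' (· < ·) p.support) := by
  constructor
  · intro hA
    exact ⟨⟨hG, acyclic_of_no_active hA⟩, incr_of_no_active hn hA⟩
  · rintro ⟨hT, hInc⟩ e ⟨hlt, hreach⟩
    obtain ⟨p, hp, hkeys⟩ := exists_path_above hreach
    have hnn : ¬ p.Nil := SimpleGraph.Walk.not_nil_of_ne hlt.ne
    obtain ⟨z, hadj, q, rfl⟩ := SimpleGraph.Walk.not_nil_iff.mp hnn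
    have hmem : s((ofLex e).1, z) ∈ (SimpleGraph.Walk.cons hadj q).edges := by
      rw [SimpleGraph.Walk.edges_cons]; exact List.mem_cons_self
    have hjz : (ofLex e).2 < z := snd_lt_of_lt_key hadj.ne' (hkeys _ _ hmem)
    have hzle := mem_support_le_max
      (fun ha hb hav hbv => unique_small_nbr hn hT hInc ha hb hav hbv)
      (SimpleGraph.Walk.cons hadj q) hp z
      (by rw [SimpleGraph.Walk.support_cons]; exact List.mem_cons_of_mem _ q.start_mem_support)
    rw [max_eq_right hlt.le] at hzle
    exact absurd hjz (not_lt.mpr hzle)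
end

section
/- For any fixed h ∈ Z^n, the sum over all connected spanning subgraphs G of G_h of (-1)^{e(G)} equals (-1)^n times the number of h-increasing trees on {0,...,n}. -/
open scoped Classical
open MeasureTheory

noncomputable section

def extv {α : Type*} [Zero α] {n : ℕ} (x : Fin n → α) : Fin (n + 1) → α :=
  Fin.cases 0 x

/-- The centroid `h̄` of `h ∈ ℤ^n`: `h̄_i = h_i + i/(n+1)`, with the convention `h_0 = 0`. -/
def cent (n : ℕ) (h : Fin n → ℤ) : Fin (n + 1) → ℝ :=
  fun i => (extv h i : ℤ) + (i : ℝ) / (n + 1)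

/-- The graph `G_h` on `{0, …, n}` whose edges are the pairs `(i,j)` with `|h̄_i - h̄_j| < 1`. -/
def Gh (n : ℕ) (h : Fin n → ℤ) : SimpleGraph (Fin (n + 1)) where
  Adj i j := i ≠ j ∧ |cent n h i - cent n h j| < 1
  symm := ⟨fun i j hij => ⟨hij.1.symm, by rw [abs_sub_comm]; exact hij.2⟩⟩
  loopless := ⟨fun i hi => hi.1 rfl⟩

/-- The key of the pair `(i, j)`: the pair `(min(h̄_i, h̄_j), max(h̄_i, h̄_j))` with the
lexicographic order, along which edges of `G_h` are ordered. -/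
def keyC (n : ℕ) (h : Fin n → ℤ) (p : Fin (n + 1) × Fin (n + 1)) : ℝ ×ₗ ℝ :=
  toLex (min (cent n h p.1) (cent n h p.2), max (cent n h p.1) (cent n h p.2))

/-- The subgraph of `G` consisting of the edges strictly greater than `e`. -/
def aboveC (n : ℕ) (h : Fin n → ℤ) (G : SimpleGraph (Fin (n + 1)))
    (e : Fin (n + 1) × Fin (n + 1)) : SimpleGraph (Fin (n + 1)) where
  Adj a b := G.Adj a b ∧ keyC n h e < keyC n h (a, b)
  symm := by
    constructor
    intro a b hab
    refine ⟨hab.1.symm, ?_⟩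
    have hk : keyC n h (a, b) = keyC n h (b, a) := by
      simp only [keyC]; rw [min_comm (cent n h a), max_comm (cent n h a)]
    rw [← hk]; exact hab.2
  loopless := ⟨fun a ha => G.loopless.irrefl a ha.1⟩

/-- An edge `e = (i, j)` of `G_h` (normalized so that `h̄_i < h̄_j`) is `(G, h)`-active if
`i` and `j` are joined by a path among the edges of `G` strictly greater than `e`. -/
def IsActiveC (n : ℕ) (h : Fin n → ℤ) (G : SimpleGraph (Fin (n + 1)))
    (e : Fin (n + 1) × Fin (n + 1)) : Prop :=
  cent n h e.1 < cent n h e.2 ∧ (Gh n h).Adj e.1 e.2 ∧ (aboveC n h G e).Reachable e.1 e.2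

/-- The finset of `(G, h)`-active edges. -/
def activeC (n : ℕ) (h : Fin n → ℤ) (G : SimpleGraph (Fin (n + 1))) :
    Finset (Fin (n + 1) × Fin (n + 1)) :=
  Finset.univ.filter (IsActiveC n h G)

/-- `G ⊕ e`: toggle the edge `e` (delete it if present, add it otherwise). -/
def toggleC {n : ℕ} (G : SimpleGraph (Fin (n + 1))) (e : Fin (n + 1) × Fin (n + 1)) :
    SimpleGraph (Fin (n + 1)) :=
  if G.Adj e.1 e.2 then G.deleteEdges {s(e.1, e.2)}
  else G ⊔ SimpleGraph.fromEdgeSet {s(e.1, e.2)}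

/-- The map `Ψ_h`: toggle the least `(G, h)`-active edge, if any. -/
def PsiH (n : ℕ) (h : Fin n → ℤ) (G : SimpleGraph (Fin (n + 1))) :
    SimpleGraph (Fin (n + 1)) :=
  if hne : (activeC n h G).Nonempty then
    toggleC G (Finset.exists_min_image (activeC n h G) (keyC n h) hne).choose
  else G

/-- The index `i_0` of the least coordinate of the centroid `h̄`. -/
def idxMin (n : ℕ) (h : Fin n → ℤ) : Fin (n + 1) :=
  (Finite.exists_min (cent n h)).choose

/-- An `h`-increasing tree on `{0, …, n}`: a spanning tree of `G_h` such that `h̄` strictly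
increases along every simple path starting at the vertex `i_0` minimizing `h̄`. -/
def IsIncTree (n : ℕ) (h : Fin n → ℤ) (T : SimpleGraph (Fin (n + 1))) : Prop :=
  T.IsTree ∧ T ≤ Gh n h ∧
    ∀ (v : Fin (n + 1)) (p : T.Walk (idxMin n h) v), p.IsPath →
      List.Chain' (fun a b => cent n h a < cent n h b) p.support

end


section Aux
variable {n : ℕ} {h : Fin n → ℤ}

lemma cent_inj (n : ℕ) (h : Fin n → ℤ) : Function.Injective (cent n h) := by
  intro i j hij
  have hn : (0:ℝ) < (n:ℝ) + 1 := by positivity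
  have hi : ((i:ℕ):ℝ) < (n:ℝ) + 1 := by exact_mod_cast i.isLt
  have hj : ((j:ℕ):ℝ) < (n:ℝ) + 1 := by exact_mod_cast j.isLt
  have hi0 : (0:ℝ) ≤ ((i:ℕ):ℝ) := Nat.cast_nonneg _
  have hj0 : (0:ℝ) ≤ ((j:ℕ):ℝ) := Nat.cast_nonneg _
  have hij' : ((extv h i - extv h j : ℤ) : ℝ) = (((j:ℕ):ℝ) - ((i:ℕ):ℝ)) / ((n:ℝ) + 1) := by
    simp only [cent] at hij
    push_cast
    field_simp at hij ⊢
    push_cast at hij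
    linarith
  have habs : |((extv h i - extv h j : ℤ) : ℝ)| < 1 := by
    rw [hij', abs_div, abs_of_pos hn, div_lt_one hn, abs_sub_lt_iff]
    constructor <;> linarith
  have hz : extv h i = extv h j := by
    have h2 : |extv h i - extv h j| < 1 := by exact_mod_cast habs
    rw [abs_lt] at h2
    omega
  have hze : ((extv h i : ℤ):ℝ) = ((extv h j : ℤ):ℝ) := by exact_mod_cast hz
  simp only [cent] at hij
  have hd : (((i:ℕ):ℝ)) / ((n:ℝ)+1) = (((j:ℕ):ℝ)) / ((n:ℝ)+1) := by
    push_cast at hij ⊢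
    linarith
  have hv : ((i:ℕ):ℝ) = ((j:ℕ):ℝ) := by
    field_simp at hd
    exact_mod_cast hd
  exact Fin.ext (by exact_mod_cast hv)

lemma cent_ne {a b : Fin (n+1)} (hab : a ≠ b) : cent n h a ≠ cent n h b :=
  fun e => hab (cent_inj n h e)

lemma keyC_comm (a b : Fin (n+1)) : keyC n h (a, b) = keyC n h (b, a) := by
  simp only [keyC]
  rw [min_comm, max_comm]

lemma keyC_norm {a b : Fin (n+1)} (hab : cent n h a < cent n h b) :
    keyC n h (a, b) = toLex (cent n h a, cent n h b) := by
  simp only [keyC]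
  rw [min_eq_left hab.le, max_eq_right hab.le]

lemma keyC_eq_of_sym2_eq {a b c d : Fin (n+1)} (habcd : s(a, b) = s(c, d)) :
    keyC n h (a, b) = keyC n h (c, d) := by
  rw [Sym2.eq_iff] at habcd
  rcases habcd with ⟨rfl, rfl⟩ | ⟨rfl, rfl⟩
  · rfl
  · exact keyC_comm a b

lemma sym2_eq_of_keyC_eq {a b c d : Fin (n+1)} (hk : keyC n h (a, b) = keyC n h (c, d)) :
    s(a, b) = s(c, d) := by
  have hk' : (min (cent n h a) (cent n h b), max (cent n h a) (cent n h b))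
      = (min (cent n h c) (cent n h d), max (cent n h c) (cent n h d)) := toLex_inj.mp hk
  have h1 := congrArg Prod.fst hk'
  have h2 := congrArg Prod.snd hk'
  simp only at h1 h2
  rcases le_total (cent n h a) (cent n h b) with hab | hab <;>
    rcases le_total (cent n h c) (cent n h d) with hcd | hcd
  · rw [min_eq_left hab, min_eq_left hcd] at h1
    rw [max_eq_right hab, max_eq_right hcd] at h2
    rw [cent_inj n h h1, cent_inj n h h2]
  · rw [min_eq_left hab, min_eq_right hcd] at h1
    rw [max_eq_right hab, max_eq_left hcd] at h2
    rw [cent_inj n h h1, cent_inj n h h2, Sym2.eq_swap]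
  · rw [min_eq_right hab, min_eq_left hcd] at h1
    rw [max_eq_left hab, max_eq_right hcd] at h2
    rw [cent_inj n h h1, cent_inj n h h2, Sym2.eq_swap]
  · rw [min_eq_right hab, min_eq_right hcd] at h1
    rw [max_eq_left hab, max_eq_left hcd] at h2
    rw [cent_inj n h h1, cent_inj n h h2]

lemma gh_adj {a b : Fin (n+1)} (hne : a ≠ b) (habs : |cent n h a - cent n h b| < 1) :
    (Gh n h).Adj a b := ⟨hne, habs⟩

lemma adj_cent_lt {G : SimpleGraph (Fin (n+1))} (hG : G ≤ Gh n h) {a b : Fin (n+1)}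
    (hab : G.Adj a b) : |cent n h a - cent n h b| < 1 := (hG hab).2

end Aux

section Toggle
variable {n : ℕ} {h : Fin n → ℤ} {G : SimpleGraph (Fin (n+1))}

lemma aboveC_le (e : Fin (n+1) × Fin (n+1)) : aboveC n h G e ≤ G := fun _ _ hab => hab.1

lemma aboveC_mono_graph {G' : SimpleGraph (Fin (n+1))} (hGG' : G ≤ G')
    (e : Fin (n+1) × Fin (n+1)) : aboveC n h G e ≤ aboveC n h G' e :=
  fun _ _ hab => ⟨hGG' hab.1, hab.2⟩

lemma aboveC_mono_key {e e' : Fin (n+1) × Fin (n+1)} (hk : keyC n h e' ≤ keyC n h e) :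
    aboveC n h G e ≤ aboveC n h G e' :=
  fun _ _ hab => ⟨hab.1, lt_of_le_of_lt hk hab.2⟩

lemma reach_transfer {G H : SimpleGraph (Fin (n+1))}
    (hadj : ∀ a b, G.Adj a b → H.Reachable a b) {x y : Fin (n+1)} (w : G.Walk x y) :
    H.Reachable x y := by
  induction w with
  | nil => exact SimpleGraph.Reachable.refl _
  | cons hxz w ih => exact (hadj _ _ hxz).trans ih

lemma mem_activeC_iff {e : Fin (n+1) × Fin (n+1)} :
    e ∈ activeC n h G ↔ IsActiveC n h G e := by
  simp [activeC]

lemma toggleC_adj_of_ne {e : Fin (n+1) × Fin (n+1)} {a b : Fin (n+1)}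
    (hne : s(a, b) ≠ s(e.1, e.2)) : (toggleC G e).Adj a b ↔ G.Adj a b := by
  unfold toggleC
  split_ifs with hG
  · simp [SimpleGraph.deleteEdges_adj, hne]
  · simp only [SimpleGraph.sup_adj, SimpleGraph.fromEdgeSet_adj, Set.mem_singleton_iff]
    constructor
    · rintro (hh | ⟨hs, _⟩)
      · exact hh
      · exact absurd hs hne
    · exact Or.inl

lemma toggleC_adj_self {e : Fin (n+1) × Fin (n+1)} (he : e.1 ≠ e.2) :
    (toggleC G e).Adj e.1 e.2 ↔ ¬ G.Adj e.1 e.2 := by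
  unfold toggleC
  split_ifs with hG <;>
    simp [SimpleGraph.deleteEdges_adj, SimpleGraph.fromEdgeSet_adj, hG, he]

lemma toggleC_toggleC {e : Fin (n+1) × Fin (n+1)} (he : e.1 ≠ e.2) :
    toggleC (toggleC G e) e = G := by
  have hcomm : ∀ H : SimpleGraph (Fin (n+1)), H.Adj e.2 e.1 ↔ H.Adj e.1 e.2 :=
    fun H => H.adj_comm _ _
  ext a b
  by_cases hab : s(a, b) = s(e.1, e.2)
  · rw [Sym2.eq_iff] at hab
    rcases hab with ⟨rfl, rfl⟩ | ⟨rfl, rfl⟩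
    · rw [toggleC_adj_self he, toggleC_adj_self he, not_not]
    · rw [hcomm, hcomm G, toggleC_adj_self he, toggleC_adj_self he, not_not]
  · rw [toggleC_adj_of_ne hab, toggleC_adj_of_ne hab]

lemma toggleC_ne {e : Fin (n+1) × Fin (n+1)} (he : e.1 ≠ e.2) : toggleC G e ≠ G := by
  intro heq
  have h2 := toggleC_adj_self (G := G) he
  rw [heq] at h2
  by_cases hadj : G.Adj e.1 e.2
  · exact (h2.mp hadj) hadj
  · exact hadj (h2.mpr hadj)

lemma toggleC_le_Gh (hG : G ≤ Gh n h) {e : Fin (n+1) × Fin (n+1)}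
    (hGh : (Gh n h).Adj e.1 e.2) : toggleC G e ≤ Gh n h := by
  intro a b hab
  by_cases hs : s(a, b) = s(e.1, e.2)
  · rw [Sym2.eq_iff] at hs
    rcases hs with ⟨rfl, rfl⟩ | ⟨rfl, rfl⟩
    · exact hGh
    · exact hGh.symm
  · exact hG ((toggleC_adj_of_ne hs).mp hab)

lemma edgeFinset_toggleC_of_adj {e : Fin (n+1) × Fin (n+1)} (hadj : G.Adj e.1 e.2) :
    (toggleC G e).edgeFinset = G.edgeFinset.erase s(e.1, e.2) := by
  ext f
  simp only [SimpleGraph.mem_edgeFinset, Finset.mem_erase]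
  unfold toggleC
  rw [if_pos hadj, SimpleGraph.edgeSet_deleteEdges]
  simp only [Set.mem_diff, Set.mem_singleton_iff]
  tauto

lemma edgeFinset_toggleC_of_not_adj {e : Fin (n+1) × Fin (n+1)} (he : e.1 ≠ e.2)
    (hadj : ¬ G.Adj e.1 e.2) :
    (toggleC G e).edgeFinset = insert s(e.1, e.2) G.edgeFinset := by
  ext f
  simp only [SimpleGraph.mem_edgeFinset, Finset.mem_insert]
  unfold toggleC
  rw [if_neg hadj, SimpleGraph.edgeSet_sup, SimpleGraph.edgeSet_fromEdgeSet]
  simp only [Set.mem_union, Set.mem_diff, Set.mem_singleton_iff, Set.mem_setOf_eq]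
  constructor
  · rintro (hf | ⟨rfl, _⟩)
    · exact Or.inr hf
    · exact Or.inl rfl
  · rintro (rfl | hf)
    · exact Or.inr ⟨rfl, by simp [Sym2.isDiag_iff_proj_eq, he]⟩
    · exact Or.inl hf

lemma neg_one_pow_toggleC {e : Fin (n+1) × Fin (n+1)} (he : e.1 ≠ e.2) :
    (-1 : ℤ) ^ G.edgeFinset.card + (-1) ^ (toggleC G e).edgeFinset.card = 0 := by
  by_cases hadj : G.Adj e.1 e.2
  · rw [edgeFinset_toggleC_of_adj hadj]
    have hmem : s(e.1, e.2) ∈ G.edgeFinset := by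
      rw [SimpleGraph.mem_edgeFinset]; exact hadj
    rw [← Finset.card_erase_add_one hmem, pow_succ]
    ring
  · rw [edgeFinset_toggleC_of_not_adj he hadj]
    have hmem : s(e.1, e.2) ∉ G.edgeFinset := by
      rw [SimpleGraph.mem_edgeFinset]
      exact fun hc => hadj hc
    rw [Finset.card_insert_of_notMem hmem, pow_succ]
    ring

lemma aboveC_le_deleteEdges {e : Fin (n+1) × Fin (n+1)} :
    aboveC n h G e ≤ G.deleteEdges {s(e.1, e.2)} := by
  intro a b hab
  rw [SimpleGraph.deleteEdges_adj]
  refine ⟨hab.1, ?_⟩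
  simp only [Set.mem_singleton_iff]
  intro hs
  exact (ne_of_gt hab.2) (keyC_eq_of_sym2_eq hs)

lemma toggleC_connected {e : Fin (n+1) × Fin (n+1)} (hconn : G.Connected)
    (hcase : (G.deleteEdges {s(e.1, e.2)}).Reachable e.1 e.2) :
    (toggleC G e).Connected := by
  unfold toggleC
  split_ifs with hadj
  · have hpre : ∀ a b, G.Adj a b → (G.deleteEdges {s(e.1, e.2)}).Reachable a b := by
      intro a b hab
      by_cases hs : s(a, b) = s(e.1, e.2)
      · rw [Sym2.eq_iff] at hs
        rcases hs with ⟨rfl, rfl⟩ | ⟨rfl, rfl⟩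
        · exact hcase
        · exact hcase.symm
      · refine SimpleGraph.Adj.reachable ?_
        rw [SimpleGraph.deleteEdges_adj]
        exact ⟨hab, by simpa using hs⟩
    rw [SimpleGraph.connected_iff] at hconn ⊢
    exact ⟨fun x y => reach_transfer hpre (hconn.1 x y).some, hconn.2⟩
  · exact hconn.mono le_sup_left

end Toggle

section Psi
variable {n : ℕ} {h : Fin n → ℤ} {G : SimpleGraph (Fin (n+1))}

lemma aboveC_toggleC_of_key_le {e f : Fin (n+1) × Fin (n+1)}
    (hef : keyC n h e ≤ keyC n h f) :
    aboveC n h (toggleC G e) f = aboveC n h G f := by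
  have hne : ∀ a b : Fin (n+1), keyC n h f < keyC n h (a, b) → s(a, b) ≠ s(e.1, e.2) := by
    intro a b hk hs
    have hkey : keyC n h (a, b) = keyC n h (e.1, e.2) := keyC_eq_of_sym2_eq hs
    rw [hkey] at hk
    exact absurd hef (not_le.mpr hk)
  ext a b
  show (toggleC G e).Adj a b ∧ _ ↔ G.Adj a b ∧ _
  constructor
  · rintro ⟨hadj, hk⟩
    exact ⟨(toggleC_adj_of_ne (hne a b hk)).mp hadj, hk⟩
  · rintro ⟨hadj, hk⟩
    exact ⟨(toggleC_adj_of_ne (hne a b hk)).mpr hadj, hk⟩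

lemma activeC_toggleC_min {e : Fin (n+1) × Fin (n+1)}
    (hact : IsActiveC n h G e)
    (hmin : ∀ f ∈ activeC n h G, keyC n h e ≤ keyC n h f) :
    activeC n h (toggleC G e) = activeC n h G := by
  ext f
  rw [mem_activeC_iff, mem_activeC_iff]
  rcases le_or_gt (keyC n h e) (keyC n h f) with hef | hef
  · unfold IsActiveC
    rw [aboveC_toggleC_of_key_le hef]
  · constructor
    · intro hf
      exfalso
      have hGf : IsActiveC n h G f := by
        refine ⟨hf.1, hf.2.1, ?_⟩
        refine reach_transfer ?_ hf.2.2.some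
        intro a b hab
        obtain ⟨hadj, hk⟩ := hab
        by_cases hs : s(a, b) = s(e.1, e.2)
        · have hre : (aboveC n h G f).Reachable e.1 e.2 :=
            (hact.2.2).mono (aboveC_mono_key hef.le)
          rw [Sym2.eq_iff] at hs
          rcases hs with ⟨rfl, rfl⟩ | ⟨rfl, rfl⟩
          · exact hre
          · exact hre.symm
        · exact SimpleGraph.Adj.reachable ⟨(toggleC_adj_of_ne hs).mp hadj, hk⟩
      exact absurd (hmin f (mem_activeC_iff.mpr hGf)) (not_le.mpr hef)
    · intro hf
      exact absurd (hmin f (mem_activeC_iff.mpr hf)) (not_le.mpr hef)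

lemma choose_min_congr {α β : Type*} [LinearOrder β] {s t : Finset α} (f : α → β)
    (hs : s.Nonempty) (ht : t.Nonempty) (hst : s = t) :
    (Finset.exists_min_image s f hs).choose = (Finset.exists_min_image t f ht).choose := by
  subst hst
  rfl

lemma psih_spec (hG : G ≤ Gh n h) (hconn : G.Connected) (hne : (activeC n h G).Nonempty) :
    PsiH n h G ≤ Gh n h ∧ (PsiH n h G).Connected ∧
    activeC n h (PsiH n h G) = activeC n h G ∧
    PsiH n h (PsiH n h G) = G ∧ PsiH n h G ≠ G ∧
    (-1 : ℤ) ^ G.edgeFinset.card + (-1) ^ (PsiH n h G).edgeFinset.card = 0 := by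
  have hPsi : PsiH n h G
      = toggleC G (Finset.exists_min_image (activeC n h G) (keyC n h) hne).choose :=
    dif_pos hne
  set e := (Finset.exists_min_image (activeC n h G) (keyC n h) hne).choose with hedef
  obtain ⟨hemem, hemin⟩ := (Finset.exists_min_image (activeC n h G) (keyC n h) hne).choose_spec
  have hact : IsActiveC n h G e := mem_activeC_iff.mp hemem
  have helt : cent n h e.1 < cent n h e.2 := hact.1
  have hene : e.1 ≠ e.2 := fun hc => absurd helt (by rw [hc]; exact lt_irrefl _)
  have hGh_e : (Gh n h).Adj e.1 e.2 := hact.2.1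
  have hle : PsiH n h G ≤ Gh n h := hPsi ▸ toggleC_le_Gh hG hGh_e
  have hreach : (G.deleteEdges {s(e.1, e.2)}).Reachable e.1 e.2 :=
    (hact.2.2).mono aboveC_le_deleteEdges
  have hconn' : (PsiH n h G).Connected := hPsi ▸ toggleC_connected hconn hreach
  have hactset : activeC n h (PsiH n h G) = activeC n h G :=
    hPsi ▸ activeC_toggleC_min hact hemin
  have hne' : (activeC n h (PsiH n h G)).Nonempty := by rw [hactset]; exact hne
  have hPsi2 : PsiH n h (PsiH n h G) = toggleC (PsiH n h G)
      (Finset.exists_min_image (activeC n h (PsiH n h G)) (keyC n h) hne').choose :=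
    dif_pos hne'
  have hchoose : (Finset.exists_min_image (activeC n h (PsiH n h G)) (keyC n h) hne').choose
      = e := choose_min_congr (keyC n h) hne' hne hactset
  have hinv : PsiH n h (PsiH n h G) = G := by
    rw [hPsi2, hchoose, hPsi, toggleC_toggleC hene]
  refine ⟨hle, hconn', hactset, hinv, ?_, ?_⟩
  · rw [hPsi]; exact toggleC_ne hene
  · rw [hPsi]; exact neg_one_pow_toggleC hene

end Psi

section Acyc
variable {n : ℕ} {h : Fin n → ℤ} {G T : SimpleGraph (Fin (n+1))}

noncomputable def keyS (n : ℕ) (h : Fin n → ℤ) : Sym2 (Fin (n+1)) → ℝ ×ₗ ℝ :=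
  Sym2.lift ⟨fun a b => keyC n h (a, b), fun a b => keyC_comm a b⟩

@[simp] lemma keyS_mk (a b : Fin (n+1)) : keyS n h s(a, b) = keyC n h (a, b) := rfl

lemma keyS_inj : Function.Injective (keyS n h) := by
  intro f g
  induction f using Sym2.ind with
  | _ a b =>
    induction g using Sym2.ind with
    | _ c d => exact fun hk => sym2_eq_of_keyC_eq hk

lemma sdiff_single_edge_mem {G : SimpleGraph (Fin (n+1))} {a b : Fin (n+1)} (f' : Sym2 (Fin (n+1)))
    (hf : f' ∈ (G \ SimpleGraph.fromEdgeSet {s(a, b)}).edgeSet) :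
    f' ∈ G.edgeSet ∧ f' ≠ s(a, b) := by
  induction f' using Sym2.ind with
  | _ x y =>
    rw [SimpleGraph.mem_edgeSet, SimpleGraph.sdiff_adj, SimpleGraph.fromEdgeSet_adj] at hf
    refine ⟨(SimpleGraph.mem_edgeSet G).mpr hf.1, ?_⟩
    intro hc
    exact hf.2 ⟨by rw [hc]; exact Set.mem_singleton _, hf.1.ne⟩

lemma walk_mapLe_support {G G' : SimpleGraph (Fin (n+1))} (hle : G ≤ G') {u v : Fin (n+1)}
    (p : G.Walk u v) : (p.mapLe hle).support = p.support := by
  unfold SimpleGraph.Walk.mapLe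
  rw [SimpleGraph.Walk.support_map]
  have hid : ⇑(SimpleGraph.Hom.ofLE hle) = id := rfl
  rw [hid, List.map_id]

lemma walk_mapLe_edges {G G' : SimpleGraph (Fin (n+1))} (hle : G ≤ G') {u v : Fin (n+1)}
    (p : G.Walk u v) : (p.mapLe hle).edges = p.edges := by
  unfold SimpleGraph.Walk.mapLe
  rw [SimpleGraph.Walk.edges_map]
  have hid : ⇑(SimpleGraph.Hom.ofLE hle) = id := rfl
  rw [hid, Sym2.map_id, List.map_id]

lemma isPath_concat {u v w : Fin (n+1)} {p : G.Walk u v} (hp : p.IsPath)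
    (hw : w ∉ p.support) (hadj : G.Adj v w) : (p.concat hadj).IsPath := by
  rw [← SimpleGraph.Walk.isPath_reverse_iff, SimpleGraph.Walk.reverse_concat]
  rw [SimpleGraph.Walk.cons_isPath_iff]
  refine ⟨hp.reverse, ?_⟩
  rw [SimpleGraph.Walk.support_reverse, List.mem_reverse]
  exact hw

lemma acyclic_of_no_active_s19 (hG : G ≤ Gh n h) (hempty : activeC n h G = ∅) :
    G.IsAcyclic := by
  rw [SimpleGraph.isAcyclic_iff_forall_adj_isBridge]
  by_contra hcon
  push_neg at hcon
  obtain ⟨v, w, hvw, hnb⟩ := hcon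
  classical
  set S := G.edgeFinset.filter (fun f => ¬ G.IsBridge f) with hS
  have hSne : S.Nonempty := by
    refine ⟨s(v, w), ?_⟩
    rw [hS, Finset.mem_filter, SimpleGraph.mem_edgeFinset]
    exact ⟨hvw, hnb⟩
  obtain ⟨f, hfS, hfmin⟩ := Finset.exists_min_image S (keyS n h) hSne
  have main : ∀ a b : Fin (n+1), cent n h a < cent n h b → G.Adj a b →
      s(a, b) ∈ S → (∀ x ∈ S, keyS n h s(a, b) ≤ keyS n h x) → False := by
    intro a b hcab hadj hmem hmin
    have hnb' : ¬ G.IsBridge s(a, b) := (Finset.mem_filter.mp hmem).2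
    rw [SimpleGraph.isBridge_iff] at hnb'
    push_neg at hnb'
    obtain ⟨P0⟩ := hnb'
    obtain ⟨P1, hP1⟩ := P0.toPath
    let P := P1.mapLe (SimpleGraph.deleteEdges_le _)
    have hPpath : P.IsPath := (SimpleGraph.Walk.mapLe_isPath _).mpr hP1
    have hPedges : ∀ f' ∈ P.edges, f' ∈ G.edgeSet ∧ f' ≠ s(a, b) := by
      intro f' hf'
      rw [walk_mapLe_edges] at hf'
      exact sdiff_single_edge_mem f' (P1.edges_subset_edgeSet hf')
    have hcyc : (P.cons hadj.symm).IsCycle := by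
      rw [SimpleGraph.Walk.cons_isCycle_iff]
      refine ⟨hPpath, ?_⟩
      rw [Sym2.eq_swap]
      exact fun hc => (hPedges _ hc).2 rfl
    have hPkey : ∀ f' ∈ P.edges, keyS n h s(a, b) < keyS n h f' := by
      intro f' hf'
      obtain ⟨hmemE, hnef⟩ := hPedges f' hf'
      have hf'nb : ¬ G.IsBridge f' := by
        intro hbr
        rw [SimpleGraph.isBridge_iff_forall_cycle_notMem hmemE] at hbr
        exact hbr (P.cons hadj.symm) hcyc (by
          rw [SimpleGraph.Walk.edges_cons]
          exact List.mem_cons_of_mem _ hf')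
      have hmemS : f' ∈ S := by
        rw [hS, Finset.mem_filter, SimpleGraph.mem_edgeFinset]
        exact ⟨hmemE, hf'nb⟩
      exact lt_of_le_of_ne (hmin f' hmemS) (fun hkeq => hnef (keyS_inj hkeq).symm)
    have hactive : IsActiveC n h G (a, b) := by
      refine ⟨hcab, hG hadj, ?_⟩
      have hsub : ∀ f' ∈ P.edges, f' ∈ (aboveC n h G (a, b)).edgeSet := by
        intro f' hf'
        induction f' using Sym2.ind with
        | _ x y =>
          rw [SimpleGraph.mem_edgeSet]
          refine ⟨(hPedges _ hf').1, ?_⟩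
          exact hPkey _ hf'
      exact ⟨P.transfer _ hsub⟩
    have : (a, b) ∈ activeC n h G := mem_activeC_iff.mpr hactive
    rw [hempty] at this
    exact absurd this (Finset.notMem_empty _)
  revert hfS hfmin
  induction f using Sym2.ind with
  | _ a b =>
    intro hfS hfmin
    have hadj : G.Adj a b := by
      have := (Finset.mem_filter.mp hfS).1
      rwa [SimpleGraph.mem_edgeFinset, SimpleGraph.mem_edgeSet] at this
    rcases lt_trichotomy (cent n h a) (cent n h b) with hlt | heq | hgt
    · exact main a b hlt hadj hfS hfmin
    · exact absurd (cent_inj n h heq) hadj.ne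
    · refine main b a hgt hadj.symm ?_ ?_
      · rwa [Sym2.eq_swap]
      · intro x hx
        rw [keyS_mk, ← keyC_comm]
        exact hfmin x hx
end Acyc

section IncNoActive
variable {n : ℕ} {h : Fin n → ℤ} {T : SimpleGraph (Fin (n+1))}

/-- In an increasing tree, each vertex has at most one neighbor with smaller centroid. -/
lemma trans_centlt : IsTrans (Fin (n+1)) (fun a b => cent n h a < cent n h b) :=
  ⟨fun _ _ _ => lt_trans⟩

lemma lower_nbr_unique (hT : IsIncTree n h T) {z w y : Fin (n+1)}
    (hzw : T.Adj z w) (hzy : T.Adj z y) (hw : cent n h w < cent n h z)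
    (hy : cent n h y < cent n h z) : w = y := by
  obtain ⟨P, hP, hPuniq⟩ := hT.1.existsUnique_path (idxMin n h) z
  have key : ∀ y' : Fin (n+1), T.Adj z y' → cent n h y' < cent n h z →
      ∃ t, P.reverse.support = z :: y' :: t := by
    intro y' hzy' hy'
    obtain ⟨Q, hQ, -⟩ := hT.1.existsUnique_path (idxMin n h) y'
    have hchain := hT.2.2 y' Q hQ
    by_cases hzQ : z ∈ Q.support
    · exfalso
      -- z appears in Q, y' is the endpoint; pairwise gives cent z < cent y'
      have hpair : List.Pairwise (fun a b => cent n h a < cent n h b) Q.support :=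
        (by haveI : Trans (fun a b : Fin (n+1) => cent n h a < cent n h b) (fun a b => cent n h a < cent n h b) (fun a b => cent n h a < cent n h b) := ⟨lt_trans⟩; exact List.isChain_iff_pairwise.mp hchain)
      have hrev : List.Pairwise (fun a b => cent n h b < cent n h a) Q.support.reverse :=
        List.pairwise_reverse.mpr hpair
      have hrevsup : Q.support.reverse = y' :: Q.reverse.support.tail := by
        rw [← SimpleGraph.Walk.support_reverse]
        exact SimpleGraph.Walk.support_eq_cons _
      rw [hrevsup] at hrev
      have hzmem : z ∈ Q.reverse.support.tail := by
        have : z ∈ y' :: Q.reverse.support.tail := by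
          rw [← hrevsup, List.mem_reverse]; exact hzQ
        rcases List.mem_cons.mp this with hc | hc
        · exact absurd hc hzy'.ne
        · exact hc
      have := (List.pairwise_cons.mp hrev).1 z hzmem
      exact absurd hy' (not_lt.mpr this.le)
    · have hQ' : (Q.concat hzy'.symm).IsPath := isPath_concat hQ hzQ hzy'.symm
      have hPeq : Q.concat hzy'.symm = P := hPuniq _ hQ'
      refine ⟨Q.reverse.support.tail, ?_⟩
      rw [← hPeq, SimpleGraph.Walk.reverse_concat, SimpleGraph.Walk.support_cons]
      congr 1
      exact SimpleGraph.Walk.support_eq_cons _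
  obtain ⟨t1, h1⟩ := key w hzw hw
  obtain ⟨t2, h2⟩ := key y hzy hy
  rw [h1] at h2
  exact (List.cons.injEq _ _ _ _).mp ((List.cons.injEq _ _ _ _).mp h2).2 |>.1

/-- In an increasing tree, a path whose first step ascends, ascends all the way. -/
lemma ascend_chain (hT : IsIncTree n h T) :
    ∀ (y t : Fin (n+1)) (q : T.Walk y t), q.IsPath → ∀ z, T.Adj z y →
      cent n h z < cent n h y → z ∉ q.support →
      List.Chain' (fun a b => cent n h a < cent n h b) (z :: q.support) := by
  intro y t q
  induction q with
  | nil =>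
    intro _ z _ hzc _
    simp [List.Chain', hzc]
  | @cons y x t hyx q' ih =>
    intro hq z hzy hzc hzn
    have hq' : q'.IsPath := hq.of_cons
    have hyn : y ∉ q'.support := (SimpleGraph.Walk.cons_isPath_iff _ _).mp hq |>.2
    have hxy : cent n h y < cent n h x := by
      rcases lt_trichotomy (cent n h y) (cent n h x) with hlt | heq | hgt
      · exact hlt
      · exact absurd (cent_inj n h heq) hyx.ne
      · exfalso
        have : z = x := lower_nbr_unique hT hzy.symm hyx hzc hgt
        apply hzn
        rw [SimpleGraph.Walk.support_cons, this]
        exact List.mem_cons_of_mem _ (SimpleGraph.Walk.start_mem_support _)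
    have hzn' : y ∉ q'.support := hyn
    have hchain := ih hq' y hyx hxy hyn
    rw [SimpleGraph.Walk.support_cons]
    have hsup := SimpleGraph.Walk.support_eq_cons q'
    rw [hsup]
    rw [hsup] at hchain
    exact List.isChain_cons_cons.mpr ⟨hzc, hchain⟩

lemma no_active_of_incTree (hT : IsIncTree n h T) : activeC n h T = ∅ := by
  rw [Finset.eq_empty_iff_forall_notMem]
  intro e hmem
  rw [mem_activeC_iff] at hmem
  obtain ⟨u, v⟩ := e
  obtain ⟨hlt, hGhuv, hreach⟩ := hmem
  obtain ⟨P, hP⟩ := hreach.some.toPath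
  have hAle : aboveC n h T (u, v) ≤ T := aboveC_le _
  cases P with
  | nil => exact absurd hlt (lt_irrefl _)
  | @cons _ x _ hax q =>
    obtain ⟨hTux, hkux⟩ := hax
    have hxu : cent n h u < cent n h x := by
      rcases lt_trichotomy (cent n h u) (cent n h x) with hlt' | heq | hgt
      · exact hlt'
      · exact absurd (cent_inj n h heq) hTux.ne
      · exfalso
        have hk1 : keyC n h (u, x) = toLex (cent n h x, cent n h u) := by
          rw [keyC_comm, keyC_norm hgt]
        have hk2 : keyC n h (u, v) = toLex (cent n h u, cent n h v) := keyC_norm hlt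
        rw [hk1, hk2, Prod.Lex.lt_iff] at hkux
        rcases hkux with hc | ⟨hc, -⟩
        · exact absurd hc (not_lt.mpr hgt.le)
        · exact absurd (cent_inj n h hc) hTux.ne
    have hvx : cent n h v < cent n h x := by
      have hk1 : keyC n h (u, x) = toLex (cent n h u, cent n h x) := keyC_norm hxu
      have hk2 : keyC n h (u, v) = toLex (cent n h u, cent n h v) := keyC_norm hlt
      rw [hk1, hk2, Prod.Lex.lt_iff] at hkux
      rcases hkux with hc | ⟨-, hc⟩
      · exact absurd hc (lt_irrefl _)
      · exact hc
    have hxv : x ≠ v := fun hc => absurd (hc ▸ hvx) (lt_irrefl _)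
    -- map tail to T
    have hq : q.IsPath := hP.of_cons
    have hun : u ∉ q.support := (SimpleGraph.Walk.cons_isPath_iff _ _).mp hP |>.2
    let q' := q.mapLe hAle
    have hq' : q'.IsPath := (SimpleGraph.Walk.mapLe_isPath hAle).mpr hq
    have hsupq : q'.support = q.support := walk_mapLe_support hAle q
    have hun' : u ∉ q'.support := by rw [hsupq]; exact hun
    have hchain := ascend_chain hT x v q' hq' u hTux hxu hun'
    -- chain' (u :: q'.support); q'.support = x :: rest; v ∈ rest
    have hpair : List.Pairwise (fun a b => cent n h a < cent n h b) (u :: q'.support) :=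
      (by haveI : Trans (fun a b : Fin (n+1) => cent n h a < cent n h b) (fun a b => cent n h a < cent n h b) (fun a b => cent n h a < cent n h b) := ⟨lt_trans⟩; exact List.isChain_iff_pairwise.mp hchain)
    have hpair2 : List.Pairwise (fun a b => cent n h a < cent n h b) q'.support :=
      (List.pairwise_cons.mp hpair).2
    have hsup := SimpleGraph.Walk.support_eq_cons q'
    rw [hsup] at hpair2
    have hvmem : v ∈ q'.support.tail := by
      have hvs : v ∈ q'.support := SimpleGraph.Walk.end_mem_support _
      rw [hsup] at hvs
      rcases List.mem_cons.mp hvs with hc | hc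
      · exact absurd hc.symm hxv
      · exact hc
    have := (List.pairwise_cons.mp hpair2).1 v hvmem
    exact absurd hvx (not_lt.mpr this.le)

end IncNoActive

section NoActiveInc
variable {n : ℕ} {h : Fin n → ℤ} {G T : SimpleGraph (Fin (n+1))}

lemma idxMin_spec (n : ℕ) (h : Fin n → ℤ) : ∀ j, cent n h (idxMin n h) ≤ cent n h j :=
  (Finite.exists_min (cent n h)).choose_spec

/-- Walking from `a` (above `v`) down to the minimum, we first dip below `v` at a vertex `m`
within distance 1, reachable from `a` by edges of key above that of `(m, v)`. -/
lemma descend_reach (hG : G ≤ Gh n h) {v : Fin (n+1)} :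
    ∀ (y a : Fin (n+1)) (q : G.Walk a y), cent n h y ≤ cent n h v → cent n h v < cent n h a →
      v ∉ q.support →
      ∃ m, cent n h m < cent n h v ∧ cent n h v - cent n h m < 1 ∧
        (aboveC n h G (m, v)).Reachable a m := by
  intro y a q
  induction q with
  | nil =>
    intro hy hva _
    exact absurd hy (not_le.mpr hva)
  | @cons a a' _ haa' q' ih =>
    intro hy hva hvn
    have hvna : v ∉ q'.support ∧ v ≠ a := by
      rw [SimpleGraph.Walk.support_cons] at hvn
      exact ⟨fun hc => hvn (List.mem_cons_of_mem _ hc), fun hc => hvn (hc ▸ List.mem_cons_self)⟩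
    rcases lt_or_ge (cent n h a') (cent n h v) with hlt | hge
    · refine ⟨a', hlt, ?_, ?_⟩
      · have habs := adj_cent_lt hG haa'
        rw [abs_lt] at habs
        linarith
      · refine SimpleGraph.Adj.reachable ?_
        refine ⟨haa', ?_⟩
        have hk1 : keyC n h (a', v) = toLex (cent n h a', cent n h v) := keyC_norm hlt
        have hk2 : keyC n h (a, a') = toLex (cent n h a', cent n h a) := by
          rw [keyC_comm, keyC_norm (lt_trans hlt hva)]
        rw [hk1, hk2, Prod.Lex.lt_iff]
        exact Or.inr ⟨rfl, hva⟩
    · have hne : a' ≠ v := by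
        intro hc
        exact hvna.1 (hc ▸ SimpleGraph.Walk.start_mem_support q')
      have hgt : cent n h v < cent n h a' :=
        lt_of_le_of_ne hge (fun hc => (cent_ne hne) hc.symm)
      obtain ⟨m, hm1, hm2, hr⟩ := ih hy hgt hvna.1
      refine ⟨m, hm1, hm2, SimpleGraph.Reachable.trans (SimpleGraph.Adj.reachable ?_) hr⟩
      refine ⟨haa', ?_⟩
      have hk1 : keyC n h (m, v) = toLex (cent n h m, cent n h v) := keyC_norm hm1
      rw [hk1]
      show _ < toLex (min (cent n h a) (cent n h a'), max (cent n h a) (cent n h a'))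
      rw [Prod.Lex.lt_iff]
      left
      refine lt_min_iff.mpr ?_
      exact ⟨lt_trans hm1 hva, lt_trans hm1 hgt⟩

/-- A reversed non-increasing path yields an ascent with a tail avoiding the new start. -/
lemma exists_descent {y : Fin (n+1)} :
    ∀ (x : Fin (n+1)) (r : T.Walk x y), r.IsPath →
      ¬ List.Chain' (fun a b => cent n h b < cent n h a) r.support →
      ∃ (b a : Fin (n+1)) (q : T.Walk a y), T.Adj b a ∧
        cent n h b < cent n h a ∧ b ∉ q.support := by
  intro x r
  induction r with
  | nil =>
    intro _ hc
    simp [List.Chain'] at hc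
  | @cons x y _ hxy r' ih =>
    intro hp hc
    rw [SimpleGraph.Walk.support_cons] at hc
    by_cases h1 : cent n h y < cent n h x
    · refine ih (hp.of_cons) ?_
      intro hc'
      apply hc
      rw [SimpleGraph.Walk.support_eq_cons r']
      rw [SimpleGraph.Walk.support_eq_cons r'] at hc'
      exact List.isChain_cons_cons.mpr ⟨h1, hc'⟩
    · have hlt : cent n h x < cent n h y :=
        lt_of_le_of_ne (not_lt.mp h1) (cent_ne hxy.ne)
      exact ⟨x, y, r', hxy, hlt, (SimpleGraph.Walk.cons_isPath_iff _ _).mp hp |>.2⟩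

lemma chain_of_no_active (hG : T ≤ Gh n h) (hempty : activeC n h T = ∅) :
    ∀ (v : Fin (n+1)) (p : T.Walk (idxMin n h) v), p.IsPath →
      List.Chain' (fun a b => cent n h a < cent n h b) p.support := by
  intro v p hp
  by_contra hc
  have hrp : p.reverse.IsPath := hp.reverse
  have hcr : ¬ List.Chain' (fun a b => cent n h b < cent n h a) p.reverse.support := by
    intro hcc
    apply hc
    rw [SimpleGraph.Walk.support_reverse] at hcc
    exact List.isChain_reverse.mp hcc
  obtain ⟨b, a, q, hba, hblt, hbn⟩ := exists_descent v p.reverse hrp hcr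
  obtain ⟨m, hm1, hm2, hr⟩ := descend_reach hG (idxMin n h) a q (idxMin_spec n h b) hblt hbn
  have hmb : m ≠ b := fun hc' => absurd (hc' ▸ hm1) (lt_irrefl _)
  have habs : |cent n h m - cent n h b| < 1 := by
    rw [abs_lt]
    constructor <;> linarith
  have hreach : (aboveC n h T (m, b)).Reachable m b := by
    have hba' : (aboveC n h T (m, b)).Adj b a := by
      refine ⟨hba, ?_⟩
      have hk1 : keyC n h (m, b) = toLex (cent n h m, cent n h b) := keyC_norm hm1
      have hk2 : keyC n h (b, a) = toLex (cent n h b, cent n h a) := keyC_norm hblt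
      rw [hk1, hk2, Prod.Lex.lt_iff]
      exact Or.inl hm1
    exact ((SimpleGraph.Adj.reachable hba').trans hr).symm
  have hactive : IsActiveC n h T (m, b) := ⟨hm1, gh_adj hmb habs, hreach⟩
  have hmem : (m, b) ∈ activeC n h T := mem_activeC_iff.mpr hactive
  rw [hempty] at hmem
  exact absurd hmem (Finset.notMem_empty _)

end NoActiveInc

section Final
variable {n : ℕ} {h : Fin n → ℤ}

lemma fixed_iff_incTree (G : SimpleGraph (Fin (n+1))) :
    (G ≤ Gh n h ∧ G.Connected ∧ activeC n h G = ∅) ↔ IsIncTree n h G := by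
  constructor
  · rintro ⟨hle, hconn, hempty⟩
    exact ⟨⟨hconn, acyclic_of_no_active_s19 hle hempty⟩, hle, chain_of_no_active hle hempty⟩
  · rintro ⟨htree, hle, hchain⟩
    exact ⟨hle, htree.isConnected, no_active_of_incTree ⟨htree, hle, hchain⟩⟩

lemma finite_toFinset_eq (G : SimpleGraph (Fin (n+1))) :
    G.edgeSet.toFinite.toFinset = G.edgeFinset := by
  ext f
  rw [Set.Finite.mem_toFinset, SimpleGraph.mem_edgeFinset]

end Final


/-- For fixed `h ∈ ℤ^n`, the alternating sum of `(-1)^{e(G)}` over connected spanning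
subgraphs `G` of `G_h` equals `(-1)^n` times the number of `h`-increasing trees. -/
theorem sum_connected_subgraphs_Gh (n : ℕ) (h : Fin n → ℤ) :
    ∑ G ∈ Finset.univ.filter
        (fun G : SimpleGraph (Fin (n + 1)) => G ≤ Gh n h ∧ G.Connected),
      (-1 : ℤ) ^ (G.edgeSet.toFinite.toFinset.card)
    = (-1) ^ n *
        (Finset.univ.filter (fun T : SimpleGraph (Fin (n + 1)) => IsIncTree n h T)).card := by
  classical
  have hedge : ∀ G : SimpleGraph (Fin (n + 1)),
      (-1 : ℤ) ^ (G.edgeSet.toFinite.toFinset.card) = (-1) ^ G.edgeFinset.card := by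
    intro G
    rw [finite_toFinset_eq]
  rw [Finset.sum_congr rfl (fun G _ => hedge G)]
  set S := Finset.univ.filter
      (fun G : SimpleGraph (Fin (n + 1)) => G ≤ Gh n h ∧ G.Connected) with hS
  have hsplit := Finset.sum_filter_add_sum_filter_not S
    (fun G => activeC n h G = ∅) (fun G => (-1 : ℤ) ^ G.edgeFinset.card)
  rw [← hsplit]
  have hzero : ∑ G ∈ S.filter (fun G => ¬ activeC n h G = ∅),
      (-1 : ℤ) ^ G.edgeFinset.card = 0 := by
    have hmem' : ∀ G ∈ S.filter (fun G => ¬ activeC n h G = ∅),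
        G ≤ Gh n h ∧ G.Connected ∧ (activeC n h G).Nonempty := by
      intro G hG
      obtain ⟨hGS, hne⟩ := Finset.mem_filter.mp hG
      obtain ⟨-, hle, hconn⟩ := Finset.mem_filter.mp hGS
      exact ⟨hle, hconn, Finset.nonempty_iff_ne_empty.mpr hne⟩
    have gmem : ∀ (G : SimpleGraph (Fin (n+1)))
        (hG : G ∈ S.filter (fun G => ¬ activeC n h G = ∅)),
        PsiH n h G ∈ S.filter (fun G => ¬ activeC n h G = ∅) := by
      intro G hG
      obtain ⟨hle, hconn, hne⟩ := hmem' G hG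
      obtain ⟨hle', hconn', hact', -, -, -⟩ := psih_spec hle hconn hne
      rw [Finset.mem_filter, hS, Finset.mem_filter]
      refine ⟨⟨Finset.mem_univ _, hle', hconn'⟩, ?_⟩
      rw [hact']
      exact Finset.nonempty_iff_ne_empty.mp hne
    refine Finset.sum_involution (fun G _ => PsiH n h G) ?_ ?_ gmem ?_
    · intro G hG
      obtain ⟨hle, hconn, hne⟩ := hmem' G hG
      obtain ⟨-, -, -, -, -, hsign⟩ := psih_spec hle hconn hne
      exact hsign
    · intro G hG _
      obtain ⟨hle, hconn, hne⟩ := hmem' G hG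
      obtain ⟨-, -, -, -, hne', -⟩ := psih_spec hle hconn hne
      exact hne'
    · intro G hG
      obtain ⟨hle, hconn, hne⟩ := hmem' G hG
      obtain ⟨-, -, -, hinv, -, -⟩ := psih_spec hle hconn hne
      exact hinv
  rw [hzero, add_zero]
  have hPeq : S.filter (fun G => activeC n h G = ∅)
      = Finset.univ.filter (fun T : SimpleGraph (Fin (n + 1)) => IsIncTree n h T) := by
    ext G
    rw [Finset.mem_filter, hS, Finset.mem_filter, Finset.mem_filter]
    constructor
    · rintro ⟨⟨hu, hle, hconn⟩, hempty⟩
      exact ⟨hu, (fixed_iff_incTree G).mp ⟨hle, hconn, hempty⟩⟩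
    · rintro ⟨hu, hT⟩
      obtain ⟨hle, hconn, hempty⟩ := (fixed_iff_incTree G).mpr hT
      exact ⟨⟨hu, hle, hconn⟩, hempty⟩
  rw [hPeq]
  have hconst : ∀ G ∈ Finset.univ.filter
      (fun T : SimpleGraph (Fin (n + 1)) => IsIncTree n h T),
      (-1 : ℤ) ^ G.edgeFinset.card = (-1) ^ n := by
    intro G hG
    have hT : IsIncTree n h G := (Finset.mem_filter.mp hG).2
    have hcard : G.edgeFinset.card = n := by
      have hc := hT.1.card_edgeFinset
      rw [Fintype.card_fin] at hc
      omega
    rw [hcard]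
  rw [Finset.sum_congr rfl hconst, Finset.sum_const, nsmul_eq_mul, mul_comm]
end
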